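/- Let l ≥ 0, let λ < 0, and let J_λ be the (l+1)×(l+1) Jordan block with all diagonal entries equal to λ, all superdiagonal entries equal to 1, and all other entries 0. Suppose A = (a_{i,j}) is a real symmetric (l+1)×(l+1) matrix such that the product A·J_λ is also symmetric. Then a_{i,j} = 0 whenever i + j ≤ l + 1, and a_{i,j} = a_{l+1,1} whenever i + j = l + 2 (i.e. all entries on the main anti-diagonal are equal). -/
import Mathlib


open Matrix

lemma sumJ_aux (l : ℕ) (lam : ℝ) (f : Fin (l + 1) → ℝ) (m : Fin (l + 1)) :
    ∑ k : Fin (l + 1),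
      (if (m : ℕ) = (k : ℕ) then lam else if (m : ℕ) = (k : ℕ) + 1 then 1 else 0) * f k
    = lam * f m +
      (if 0 < (m : ℕ) then f ⟨(m : ℕ) - 1, Nat.lt_of_le_of_lt (Nat.sub_le _ _) m.isLt⟩
        else 0) := by
  have hsplit : ∀ k : Fin (l + 1),
      (if (m : ℕ) = (k : ℕ) then lam else if (m : ℕ) = (k : ℕ) + 1 then 1 else 0) * f k
      = (if k = m then lam * f k else 0) + (if (m : ℕ) = (k : ℕ) + 1 then f k else 0) := by
    intro k
    rcases eq_or_ne k m with h | h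
    · subst h
      simp
    · have hne : (m : ℕ) ≠ (k : ℕ) := fun hv => h (Fin.ext hv.symm)
      simp only [hne, if_neg, h, if_false, ite_mul, one_mul, zero_mul, zero_add]
  rw [Finset.sum_congr rfl fun k _ => hsplit k, Finset.sum_add_distrib]
  have h1 : (∑ k : Fin (l + 1), if k = m then lam * f k else 0) = lam * f m := by
    simp [Finset.sum_ite_eq']
  rw [h1]
  congr 1
  by_cases hm : 0 < (m : ℕ)
  · have hc : ∀ k : Fin (l + 1), ((m : ℕ) = (k : ℕ) + 1) ↔
        (k = ⟨(m : ℕ) - 1, Nat.lt_of_le_of_lt (Nat.sub_le _ _) m.isLt⟩) := by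
      intro k
      rw [Fin.ext_iff]
      simp only []
      omega
    rw [Finset.sum_congr rfl fun k _ => by rw [if_congr (hc k) rfl rfl]]
    simp [Finset.sum_ite_eq', hm]
  · have hm0 : (m : ℕ) = 0 := by omega
    rw [if_neg hm]
    apply Finset.sum_eq_zero
    intro k _
    rw [if_neg (by omega)]

/-- Claim 3.1 in the paper: if `A` is symmetric and `A · J_λ` is
symmetric, where `J_λ` is the `(l+1)×(l+1)` Jordan block with eigenvalue `λ < 0`,
then `A` vanishes above the main anti-diagonal and is constant on the main
anti-diagonal. (Entries are 0-indexed: the 1-indexed condition `i + j ≤ l + 1`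
becomes `i + j + 1 ≤ l`, and `i + j = l + 2` becomes `i + j = l`.) -/
theorem stmt_7 (l : ℕ) (lam : ℝ) (hlam : lam < 0)
    (Jl : Matrix (Fin (l + 1)) (Fin (l + 1)) ℝ)
    (hJl : ∀ i j : Fin (l + 1), Jl i j =
      if (j : ℕ) = (i : ℕ) then lam else if (j : ℕ) = (i : ℕ) + 1 then 1 else 0)
    (A : Matrix (Fin (l + 1)) (Fin (l + 1)) ℝ)
    (hA : Aᵀ = A) (hAJ : (A * Jl)ᵀ = A * Jl) :
    (∀ i j : Fin (l + 1), (i : ℕ) + (j : ℕ) + 1 ≤ l → A i j = 0)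
      ∧ (∀ i j : Fin (l + 1), (i : ℕ) + (j : ℕ) = l →
          A i j = A (Fin.last l) ⟨0, Nat.succ_pos l⟩) := by
  -- Jlᵀ * A = A * Jl
  have hmat : Jlᵀ * A = A * Jl := by
    calc Jlᵀ * A = Jlᵀ * Aᵀ := by rw [hA]
    _ = (A * Jl)ᵀ := by rw [transpose_mul]
    _ = A * Jl := hAJ
  have key : ∀ i j : Fin (l + 1),
      (if 0 < (i : ℕ) then A ⟨(i : ℕ) - 1, Nat.lt_of_le_of_lt (Nat.sub_le _ _) i.isLt⟩ j
        else 0)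
      = (if 0 < (j : ℕ) then A i ⟨(j : ℕ) - 1, Nat.lt_of_le_of_lt (Nat.sub_le _ _) j.isLt⟩
        else 0) := by
    intro i j
    have h1 : (Jlᵀ * A) i j = (A * Jl) i j := by rw [hmat]
    rw [mul_apply, mul_apply] at h1
    have hL : ∑ k : Fin (l + 1), Jlᵀ i k * A k j
        = lam * A i j +
          (if 0 < (i : ℕ) then A ⟨(i : ℕ) - 1, Nat.lt_of_le_of_lt (Nat.sub_le _ _) i.isLt⟩ j
            else 0) := by
      rw [← sumJ_aux l lam (fun k => A k j) i]
      apply Finset.sum_congr rfl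
      intro k _
      rw [transpose_apply, hJl]
    have hR : ∑ k : Fin (l + 1), A i k * Jl k j
        = lam * A i j +
          (if 0 < (j : ℕ) then A i ⟨(j : ℕ) - 1, Nat.lt_of_le_of_lt (Nat.sub_le _ _) j.isLt⟩
            else 0) := by
      rw [← sumJ_aux l lam (fun k => A i k) j]
      apply Finset.sum_congr rfl
      intro k _
      rw [hJl, mul_comm]
    rw [hL, hR] at h1
    exact add_left_cancel h1
  -- A 0 j = 0 for j < l
  have key0 : ∀ (j : ℕ) (hj : j < l), A ⟨0, Nat.succ_pos l⟩ ⟨j, by omega⟩ = 0 := by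
    intro j hj
    have := key ⟨0, Nat.succ_pos l⟩ ⟨j + 1, by omega⟩
    simp only [Nat.lt_irrefl, if_neg, Nat.succ_pos, if_pos, Nat.add_sub_cancel] at this
    exact this.symm
  -- A (i, j+1) = A (i+1, j)
  have keyS : ∀ (i j : ℕ) (hi : i + 1 ≤ l) (hj : j + 1 ≤ l),
      A ⟨i, by omega⟩ ⟨j + 1, by omega⟩ = A ⟨i + 1, by omega⟩ ⟨j, by omega⟩ := by
    intro i j hi hj
    have := key ⟨i + 1, by omega⟩ ⟨j + 1, by omega⟩
    simp only [Nat.succ_pos, if_pos, Nat.add_sub_cancel] at this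
    exact this
  -- constant along anti-diagonals
  have base : ∀ (i j : ℕ) (h : i + j ≤ l),
      A ⟨i, by omega⟩ ⟨j, by omega⟩ = A ⟨0, Nat.succ_pos l⟩ ⟨i + j, by omega⟩ := by
    intro i
    induction i with
    | zero => intro j h; simp
    | succ n ih =>
      intro j h
      have h1 : A ⟨n, by omega⟩ ⟨j + 1, by omega⟩ = A ⟨n + 1, by omega⟩ ⟨j, by omega⟩ :=
        keyS n j (by omega) (by omega)
      have h2 := ih (j + 1) (by omega)
      rw [← h1, h2]
      congr 1
      exact Fin.ext (by simp only [Fin.val_mk]; omega)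
  constructor
  · intro i j hij
    have hi : A i j = A ⟨(i : ℕ), i.isLt⟩ ⟨(j : ℕ), j.isLt⟩ := by
      congr 1 <;> exact Fin.ext rfl
    rw [hi, base (i : ℕ) (j : ℕ) (by omega)]
    exact key0 _ (by omega)
  · intro i j hij
    have hi : A i j = A ⟨(i : ℕ), i.isLt⟩ ⟨(j : ℕ), j.isLt⟩ := by
      congr 1 <;> exact Fin.ext rfl
    have hlast : A (Fin.last l) ⟨0, Nat.succ_pos l⟩
        = A ⟨l, by omega⟩ ⟨0, by omega⟩ := by
      congr 1
    rw [hi, base (i : ℕ) (j : ℕ) (by omega), hlast, base l 0 (by omega)]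
    congr 1
    exact Fin.ext (by simp only [Fin.val_mk]; omega)
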